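/- The variational inequality formulation of dynamic user equilibrium is equivalent to the nonlinear complementarity problem: 0 ≤ h*_p(t) ⟂ Ψ_p(t,h*) − v_ij ≥ 0 for a.e. t and all p ∈ P_ij, together with the demand satisfaction constraints Σ_{p∈P_ij} ∫ h*_p(t) dt = Q_ij with multipliers v_ij ≥ 0 for all O-D pairs (i,j). -/

import Mathlib

open MeasureTheory Set

private lemma mul_int_aux {μ : Measure ℝ} {f g : ℝ → ℝ}
    (hf : MemLp f 2 μ) (hg : MemLp g 2 μ) :
    Integrable (fun t => f t * g t) μ := by
  have h := hf.smul (p := 2) (q := 2) (r := 1) hg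
  rw [memLp_one_iff_integrable] at h
  convert h using 1
  funext t
  exact mul_comm _ _

/-- The variational inequality formulation of DUE is equivalent to the nonlinear
complementarity problem. -/
theorem stmt1
    {ι W : Type*} [Fintype ι] [Fintype W] [DecidableEq W]
    (od : ι → W)
    (t₀ t_f : ℝ) (ht : t₀ < t_f)
    (Q : W → ℝ) (hQ : ∀ w, 0 < Q w)
    (μ : Measure ℝ) (hμ : μ = volume.restrict (Icc t₀ t_f))
    (Λ : Set (ι → ℝ → ℝ))
    (hΛ : Λ = {h : ι → ℝ → ℝ |
      (∀ p, MemLp (h p) 2 μ) ∧ (∀ p, 0 ≤ᵐ[μ] h p) ∧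
      (∀ w, ∑ p ∈ Finset.univ.filter (fun p => od p = w), ∫ t, h p t ∂μ = Q w)})
    (Ψ : (ι → ℝ → ℝ) → ι → ℝ → ℝ)
    (hΨmeas : ∀ h ∈ Λ, ∀ p, Measurable (Ψ h p))
    (hΨpos : ∀ h ∈ Λ, ∀ p, ∃ c > 0, ∀ᵐ t ∂μ, c ≤ Ψ h p t)
    (hΨL2 : ∀ h ∈ Λ, ∀ p, MemLp (Ψ h p) 2 μ)
    (hstar : ι → ℝ → ℝ) (hmem : hstar ∈ Λ) :
    (∀ h ∈ Λ, 0 ≤ ∑ p : ι, ∫ t, Ψ hstar p t * (h p t - hstar p t) ∂μ) ↔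
      (∃ v : W → ℝ, (∀ w, 0 ≤ v w) ∧
        (∀ p, ∀ᵐ t ∂μ, 0 ≤ hstar p t ∧ 0 ≤ Ψ hstar p t - v (od p) ∧
          hstar p t * (Ψ hstar p t - v (od p)) = 0) ∧
        (∀ w, ∑ p ∈ Finset.univ.filter (fun p => od p = w), ∫ t, hstar p t ∂μ = Q w)) := by
  classical
  -- basic measure facts
  haveI hfin : IsFiniteMeasure μ := by
    refine ⟨?_⟩
    rw [hμ, Measure.restrict_apply_univ, Real.volume_Icc]
    exact ENNReal.ofReal_lt_top
  have hμuniv : 0 < (μ Set.univ).toReal := by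
    rw [hμ, Measure.restrict_apply_univ, Real.volume_Icc, ENNReal.toReal_ofReal (by linarith)]
    linarith
  have hmem2 := hmem
  rw [hΛ, Set.mem_setOf_eq] at hmem2
  obtain ⟨hsL2, hspos, hsdem⟩ := hmem2
  have hΦmeas : ∀ p, Measurable (Ψ hstar p) := hΨmeas hstar hmem
  have hΦL2 : ∀ p, MemLp (Ψ hstar p) 2 μ := hΨL2 hstar hmem
  have hΦint : ∀ p, Integrable (Ψ hstar p) μ := fun p => (hΦL2 p).integrable one_le_two
  have hsint : ∀ p, Integrable (hstar p) μ := fun p => (hsL2 p).integrable one_le_two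
  have hΦsint : ∀ p, Integrable (fun t => Ψ hstar p t * hstar p t) μ :=
    fun p => mul_int_aux (hΦL2 p) (hsL2 p)
  have hfiber : ∀ w : W, ∃ p, od p = w := by
    intro w
    by_contra hcon
    push_neg at hcon
    have h0 := hsdem w
    rw [Finset.filter_eq_empty_iff.mpr (fun p _ => hcon p), Finset.sum_empty] at h0
    exact (hQ w).ne h0
  constructor
  · -- VI → NCP
    intro hVI
    set S : W → Set ℝ := fun w => {c | ∀ p, od p = w → ∀ᵐ t ∂μ, c ≤ Ψ hstar p t} with hS
    choose c hc0 hcle using fun p => hΨpos hstar hmem p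
    have hSne : ∀ w, ∃ c' > 0, c' ∈ S w := by
      intro w
      obtain ⟨p₀, hp₀⟩ := hfiber w
      have hFne : (Finset.univ.filter (fun p => od p = w)).Nonempty :=
        ⟨p₀, Finset.mem_filter.mpr ⟨Finset.mem_univ _, hp₀⟩⟩
      refine ⟨(Finset.univ.filter (fun p => od p = w)).inf' hFne c, ?_, ?_⟩
      · obtain ⟨q, hq, hqe⟩ := Finset.exists_mem_eq_inf' hFne c
        rw [hqe]; exact hc0 q
      · intro p hp
        filter_upwards [hcle p] with t hct
        exact le_trans (Finset.inf'_le c (Finset.mem_filter.mpr ⟨Finset.mem_univ _, hp⟩)) hct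
    have hSbdd : ∀ w, BddAbove (S w) := by
      intro w
      obtain ⟨p₀, hp₀⟩ := hfiber w
      refine ⟨(∫ t, Ψ hstar p₀ t ∂μ) / (μ Set.univ).toReal, ?_⟩
      intro c' hc'
      rw [le_div_iff₀ hμuniv]
      have : ∫ t, (c' : ℝ) ∂μ ≤ ∫ t, Ψ hstar p₀ t ∂μ :=
        integral_mono_ae (integrable_const c') (hΦint p₀) (hc' p₀ hp₀)
      simpa [integral_const, smul_eq_mul, mul_comm, measureReal_def] using this
    set v : W → ℝ := fun w => sSup (S w) with hv
    have hv0 : ∀ w, 0 ≤ v w := by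
      intro w
      obtain ⟨c', hc'0, hc'S⟩ := hSne w
      exact le_trans hc'0.le (le_csSup (hSbdd w) hc'S)
    have hSneX : ∀ w, (S w).Nonempty := fun w => ⟨_, (hSne w).choose_spec.2⟩
    -- claim A : v is an a.e. lower bound
    have hA : ∀ p, ∀ᵐ t ∂μ, v (od p) ≤ Ψ hstar p t := by
      intro p
      have key : ∀ n : ℕ, ∀ᵐ t ∂μ, v (od p) - 1 / (n + 1) ≤ Ψ hstar p t := by
        intro n
        have hlt : v (od p) - 1 / (n + 1) < v (od p) := by
          have : (0 : ℝ) < 1 / (n + 1) := by positivity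
          linarith
        obtain ⟨c', hc'S, hc'lt⟩ := exists_lt_of_lt_csSup (hSneX (od p)) hlt
        filter_upwards [hc'S p rfl] with t hct
        linarith
      filter_upwards [ae_all_iff.mpr key] with t hct
      by_contra hlt
      push_neg at hlt
      obtain ⟨n, hn⟩ := exists_nat_one_div_lt (show (0:ℝ) < v (od p) - Ψ hstar p t by linarith)
      have := hct n
      linarith
    -- complementarity integral is ≤ 0 by exchange argument
    have hIle : ∀ p, ∫ t, hstar p t * (Ψ hstar p t - v (od p)) ∂μ ≤ 0 := by
      intro p
      by_contra hcon
      push_neg at hcon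
      set w := od p with hw
      set m := ∫ t, hstar p t ∂μ with hm
      have hm0 : 0 ≤ m := integral_nonneg_of_ae (hspos p)
      set I := ∫ t, hstar p t * (Ψ hstar p t - v w) ∂μ with hI
      set ε := I / (2 * (m + 1)) with hε
      have hε0 : 0 < ε := div_pos hcon (by linarith)
      have hnotS : v w + ε ∉ S w := fun hmemS => by
        have := le_csSup (hSbdd w) hmemS
        simp only [hv] at this
        linarith
      rw [hS, Set.mem_setOf_eq] at hnotS
      push_neg at hnotS
      obtain ⟨p', hp'w, hp'⟩ := hnotS
      set B := {t | Ψ hstar p' t < v w + ε} with hB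
      have hBmeas : MeasurableSet B := measurableSet_lt (hΦmeas p') measurable_const
      have hμB : 0 < (μ B).toReal := by
        refine ENNReal.toReal_pos ?_ (measure_ne_top μ B)
        rw [Filter.Frequently, Filter.eventually_iff, mem_ae_iff] at hp'
        intro hzero
        apply hp'
        convert hzero using 2
        ext t
        simp [hB, not_le]
      set cB := m / (μ B).toReal with hcB
      have hcB0 : 0 ≤ cB := div_nonneg hm0 hμB.le
      -- the competitor
      set g : ι → ℝ → ℝ := fun q t =>
        (if q = p then 0 else hstar q t) + (if q = p' then B.indicator (fun _ => cB) t else 0)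
        with hg
      have hindL2 : MemLp (B.indicator (fun _ => cB)) 2 μ :=
        memLp_indicator_const 2 hBmeas cB (Or.inr (measure_ne_top μ B))
      have hindint : Integrable (B.indicator (fun _ => cB)) μ := hindL2.integrable one_le_two
      have hgint : ∀ q, ∫ t, g q t ∂μ
          = (∫ t, hstar q t ∂μ) - (if q = p then m else 0) + (if q = p' then m else 0) := by
        intro q
        have h1 : ∫ t, (if q = p then (0:ℝ) else hstar q t) ∂μ
            = (∫ t, hstar q t ∂μ) - (if q = p then m else 0) := by
          by_cases hqp : q = p <;> simp [hqp, hm]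
        have hBint : ∫ t, B.indicator (fun _ => cB) t ∂μ = m := by
          rw [integral_indicator_const cB hBmeas, smul_eq_mul, hcB, mul_comm, measureReal_def,
            div_mul_cancel₀ _ hμB.ne']
        have h2 : ∫ t, (if q = p' then B.indicator (fun _ => cB) t else 0) ∂μ
            = (if q = p' then m else 0) := by
          by_cases hqp' : q = p' <;> simp [hqp', hBint]
        rw [hg]
        rw [integral_add ?_ ?_]
        · rw [h1, h2]
        · by_cases hqp : q = p <;> simp [hqp, hsint q]
        · by_cases hqp' : q = p' <;> simp [hqp', hindint]
      have hgΛ : g ∈ Λ := by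
        rw [hΛ, Set.mem_setOf_eq]
        refine ⟨?_, ?_, ?_⟩
        · intro q
          have ha : MemLp (fun t => if q = p then (0:ℝ) else hstar q t) 2 μ := by
            by_cases hqp : q = p
            · simp only [if_pos hqp]; exact memLp_const 0
            · simp only [if_neg hqp]; exact hsL2 q
          have hb : MemLp (fun t => if q = p' then B.indicator (fun _ => cB) t else 0) 2 μ := by
            by_cases hqp' : q = p'
            · simp only [if_pos hqp']; exact hindL2
            · simp only [if_neg hqp']; exact memLp_const 0
          exact ha.add hb
        · intro q
          filter_upwards [hspos q] with t hst
          show 0 ≤ (if q = p then (0:ℝ) else hstar q t)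
              + (if q = p' then B.indicator (fun _ => cB) t else 0)
          refine add_nonneg ?_ ?_
          · by_cases hqp : q = p
            · simp [hqp]
            · simpa [hqp] using hst
          · by_cases hqp' : q = p'
            · simpa [hqp'] using Set.indicator_nonneg (fun _ _ => hcB0) t
            · simp [hqp']
        · intro w'
          have : ∑ q ∈ Finset.univ.filter (fun q => od q = w'), ∫ t, g q t ∂μ
              = ∑ q ∈ Finset.univ.filter (fun q => od q = w'),
                ((∫ t, hstar q t ∂μ) - (if q = p then m else 0) + (if q = p' then m else 0)) :=
            Finset.sum_congr rfl fun q _ => hgint q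
          rw [this, Finset.sum_add_distrib, Finset.sum_sub_distrib,
            Finset.sum_ite_eq' _ p (fun _ => m), Finset.sum_ite_eq' _ p' (fun _ => m)]
          have hpm : p ∈ Finset.univ.filter (fun q => od q = w') ↔ w = w' := by
            simp [hw, eq_comm]
          have hp'm : p' ∈ Finset.univ.filter (fun q => od q = w') ↔ w = w' := by
            simp [hp'w, eq_comm]
          rw [hsdem w']
          by_cases hww : w = w' <;> simp [hpm.mpr, hp'm.mpr, hww, hpm, hp'm]
      -- compute VI value for g
      have hval : ∑ q : ι, ∫ t, Ψ hstar q t * (g q t - hstar q t) ∂μ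
          = -(∫ t, Ψ hstar p t * hstar p t ∂μ)
            + ∫ t, Ψ hstar p' t * B.indicator (fun _ => cB) t ∂μ := by
        have hterm : ∀ q, ∫ t, Ψ hstar q t * (g q t - hstar q t) ∂μ
            = -(if q = p then ∫ t, Ψ hstar p t * hstar p t ∂μ else 0)
              + (if q = p' then ∫ t, Ψ hstar p' t * B.indicator (fun _ => cB) t ∂μ else 0) := by
          intro q
          have hgq : ∀ t, g q t = (if q = p then (0:ℝ) else hstar q t)
              + (if q = p' then B.indicator (fun _ => cB) t else 0) := fun t => rfl
          by_cases hqp : q = p <;> by_cases hqp' : q = p'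
          · rw [if_pos hqp, if_pos hqp']
            have hpt : (fun t => Ψ hstar q t * (g q t - hstar q t))
                = fun t => Ψ hstar q t * B.indicator (fun _ => cB) t
                  - Ψ hstar q t * hstar q t := by
              funext t
              rw [hgq t, if_pos hqp, if_pos hqp']
              ring
            rw [hpt, integral_sub (mul_int_aux (hΦL2 q) hindL2) (hΦsint q), ← hqp, ← hqp']
            ring
          · rw [if_pos hqp, if_neg hqp']
            have hpt : (fun t => Ψ hstar q t * (g q t - hstar q t))
                = fun t => -(Ψ hstar q t * hstar q t) := by
              funext t
              rw [hgq t, if_pos hqp, if_neg hqp']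
              ring
            rw [hpt, integral_neg, ← hqp]
            ring
          · rw [if_neg hqp, if_pos hqp']
            have hpt : (fun t => Ψ hstar q t * (g q t - hstar q t))
                = fun t => Ψ hstar q t * B.indicator (fun _ => cB) t := by
              funext t
              rw [hgq t, if_neg hqp, if_pos hqp']
              ring
            rw [hpt, ← hqp']
            ring
          · rw [if_neg hqp, if_neg hqp']
            have hpt : (fun t => Ψ hstar q t * (g q t - hstar q t))
                = fun _ => (0:ℝ) := by
              funext t
              rw [hgq t, if_neg hqp, if_neg hqp']
              ring
            rw [hpt, integral_zero]
            ring
        rw [Finset.sum_congr rfl fun q _ => hterm q, Finset.sum_add_distrib,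
          Finset.sum_neg_distrib, Finset.sum_ite_eq' _ p _, Finset.sum_ite_eq' _ p' _]
        simp
      -- bound the value
      have hΨhs : ∫ t, Ψ hstar p t * hstar p t ∂μ = I + v w * m := by
        have : ∀ t, hstar p t * (Ψ hstar p t - v w)
            = Ψ hstar p t * hstar p t - v w * hstar p t := by intro t; ring
        rw [hI, integral_congr_ae (Filter.Eventually.of_forall this),
          integral_sub (hΦsint p) ((hsint p).const_mul (v w)), integral_const_mul]
        ring
      have hBbound : ∫ t, Ψ hstar p' t * B.indicator (fun _ => cB) t ∂μ ≤ (v w + ε) * m := by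
        have heq : ∀ t, Ψ hstar p' t * B.indicator (fun _ => cB) t
            = B.indicator (fun s => Ψ hstar p' s * cB) t := by
          intro t
          by_cases htB : t ∈ B <;> simp [htB]
        rw [integral_congr_ae (Filter.Eventually.of_forall heq), integral_indicator hBmeas]
        have hmono : ∫ t in B, Ψ hstar p' t * cB ∂μ ≤ ∫ t in B, (v w + ε) * cB ∂μ := by
          refine setIntegral_mono_on ?_ ?_ hBmeas ?_
          · exact ((mul_int_aux (hΦL2 p') (memLp_const cB)).integrableOn)
          · exact (integrableOn_const (measure_ne_top μ B))
          · intro t htB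
            exact mul_le_mul_of_nonneg_right (le_of_lt htB) hcB0
        refine le_trans hmono ?_
        rw [setIntegral_const, smul_eq_mul, hcB]
        exact le_of_eq (by rw [measureReal_def]; field_simp [hμB.ne'])
      have hVIg := hVI g hgΛ
      rw [hval] at hVIg
      have hfinal : -(I + v w * m) + (v w + ε) * m < 0 := by
        have h2 : ε * (2 * (m + 1)) = I := div_mul_cancel₀ I (by linarith : (2:ℝ) * (m+1) ≠ 0)
        nlinarith
      rw [hΨhs] at hVIg
      linarith [hBbound]
    -- now each complementarity integral equals zero, hence a.e. zero
    have hcompl : ∀ p, ∀ᵐ t ∂μ, hstar p t * (Ψ hstar p t - v (od p)) = 0 := by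
      intro p
      have hnn : 0 ≤ᵐ[μ] fun t => hstar p t * (Ψ hstar p t - v (od p)) := by
        filter_upwards [hspos p, hA p] with t h1 h2
        exact mul_nonneg h1 (by linarith)
      have hint : Integrable (fun t => hstar p t * (Ψ hstar p t - v (od p))) μ := by
        have : ∀ t, hstar p t * (Ψ hstar p t - v (od p))
            = Ψ hstar p t * hstar p t - hstar p t * v (od p) := by intro t; ring
        rw [show (fun t => hstar p t * (Ψ hstar p t - v (od p)))
            = fun t => Ψ hstar p t * hstar p t - hstar p t * v (od p) from funext this]
        exact (hΦsint p).sub ((hsint p).mul_const _)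
      have hzero : ∫ t, hstar p t * (Ψ hstar p t - v (od p)) ∂μ = 0 :=
        le_antisymm (hIle p) (integral_nonneg_of_ae hnn)
      have := (integral_eq_zero_iff_of_nonneg_ae hnn hint).mp hzero
      filter_upwards [this] with t h1
      exact h1
    refine ⟨v, hv0, ?_, hsdem⟩
    intro p
    filter_upwards [hspos p, hA p, hcompl p] with t h1 h2 h3
    exact ⟨h1, by linarith, h3⟩
  · -- NCP → VI
    rintro ⟨v, hv0, hcomp, hdem⟩ h hhΛ
    have hh2 := hhΛ
    rw [hΛ, Set.mem_setOf_eq] at hh2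
    obtain ⟨hhL2, hhpos, hhdem⟩ := hh2
    have hhint : ∀ p, Integrable (h p) μ := fun p => (hhL2 p).integrable one_le_two
    -- per-path lower bound
    have hterm : ∀ p, v (od p) * ((∫ t, h p t ∂μ) - ∫ t, hstar p t ∂μ)
        ≤ ∫ t, Ψ hstar p t * (h p t - hstar p t) ∂μ := by
      intro p
      have hint1 : Integrable (fun t => (Ψ hstar p t - v (od p)) * h p t) μ :=
        mul_int_aux ((hΦL2 p).sub (memLp_const _)) (hhL2 p)
      have hint2 : Integrable (fun t => (Ψ hstar p t - v (od p)) * hstar p t) μ :=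
        mul_int_aux ((hΦL2 p).sub (memLp_const _)) (hsL2 p)
      have hint3 : Integrable (fun t => v (od p) * (h p t - hstar p t)) μ :=
        (((hhint p).sub (hsint p)).const_mul _)
      have hint12 : Integrable (fun t => (Ψ hstar p t - v (od p)) * h p t
          - (Ψ hstar p t - v (od p)) * hstar p t) μ := hint1.sub hint2
      have hsplit : ∫ t, Ψ hstar p t * (h p t - hstar p t) ∂μ
          = (∫ t, (Ψ hstar p t - v (od p)) * h p t ∂μ)
            - (∫ t, (Ψ hstar p t - v (od p)) * hstar p t ∂μ)
            + ∫ t, v (od p) * (h p t - hstar p t) ∂μ := by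
        rw [← integral_sub hint1 hint2, ← integral_add hint12 hint3]
        exact integral_congr_ae (Filter.Eventually.of_forall fun t => by ring)
      have h1 : 0 ≤ ∫ t, (Ψ hstar p t - v (od p)) * h p t ∂μ := by
        refine integral_nonneg_of_ae ?_
        filter_upwards [hhpos p, hcomp p] with t hht hct
        exact mul_nonneg hct.2.1 hht
      have h2 : ∫ t, (Ψ hstar p t - v (od p)) * hstar p t ∂μ = 0 := by
        refine integral_eq_zero_of_ae ?_
        filter_upwards [hcomp p] with t hct
        have := hct.2.2
        simpa [mul_comm] using this
      have h3 : ∫ t, v (od p) * (h p t - hstar p t) ∂μ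
          = v (od p) * ((∫ t, h p t ∂μ) - ∫ t, hstar p t ∂μ) := by
        rw [integral_const_mul, integral_sub (hhint p) (hsint p)]
      rw [hsplit, h2, h3]
      linarith
    -- sum the fiberwise terms
    have hsum0 : ∑ p : ι, v (od p) * ((∫ t, h p t ∂μ) - ∫ t, hstar p t ∂μ) = 0 := by
      rw [← Finset.sum_fiberwise Finset.univ od
        (fun p => v (od p) * ((∫ t, h p t ∂μ) - ∫ t, hstar p t ∂μ))]
      refine Finset.sum_eq_zero fun w _ => ?_
      have : ∀ p ∈ Finset.univ.filter (fun p => od p = w),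
          v (od p) * ((∫ t, h p t ∂μ) - ∫ t, hstar p t ∂μ)
          = v w * ((∫ t, h p t ∂μ) - ∫ t, hstar p t ∂μ) := by
        intro p hp
        rw [(Finset.mem_filter.mp hp).2]
      rw [Finset.sum_congr rfl this, ← Finset.mul_sum, Finset.sum_sub_distrib,
        hhdem w, hdem w, sub_self, mul_zero]
    calc (0:ℝ) = ∑ p : ι, v (od p) * ((∫ t, h p t ∂μ) - ∫ t, hstar p t ∂μ) := hsum0.symm
      _ ≤ ∑ p : ι, ∫ t, Ψ hstar p t * (h p t - hstar p t) ∂μ :=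
        Finset.sum_le_sum fun p _ => hterm p
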